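/- Let k, c, m > 0, α ∈ (0,1), and consider the sliding-mode dynamics on the energy space: x₁, x₃ real-valued, z(·,t) in the weighted L² space with weight μ_{1-α}, satisfying ẋ₁-compatible relations, ∂z/∂t = -ωz + x₃, x₂ = ∫μ_{1-α}z dω, m·ẋ₃ = -k·x₁ - c·x₂. Then the energy E(t) = (k/2)x₁² + (c/2)∫μ_{1-α}(ω)z²dω + (m/2)x₃² is nonincreasing in t. -/

import Mathlib

open Real MeasureTheory Set

theorem stmt_18 (k c m α : ℝ) (hk : 0 < k) (hc : 0 < c) (hm : 0 < m)
    (hα : α ∈ Set.Ioo (0:ℝ) 1)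
    (x₁ x₂ x₃ : ℝ → ℝ) (z : ℝ → ℝ → ℝ)
    (hzode : ∀ ω, 0 < ω → ∀ t, HasDerivAt (z ω) (-ω * z ω t + x₃ t) t)
    (hx₂ : ∀ t, x₂ t = ∫ ω in Set.Ioi (0:ℝ),
      (Real.sin ((1 - α) * π) / π) * ω ^ (α - 1) * z ω t)
    (hx₁ : ∀ t, HasDerivAt x₁ (x₃ t) t)
    (hx₃ : ∀ t, HasDerivAt x₃ ((-k * x₁ t - c * x₂ t) / m) t)
    (hswap : ∀ t, HasDerivAt
      (fun τ => ∫ ω in Set.Ioi (0:ℝ),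
        (Real.sin ((1 - α) * π) / π) * ω ^ (α - 1) * (z ω τ) ^ 2)
      (∫ ω in Set.Ioi (0:ℝ),
        (Real.sin ((1 - α) * π) / π) * ω ^ (α - 1) *
          (2 * z ω t * (-ω * z ω t + x₃ t))) t)
    (hint : ∀ t, Integrable
      (fun ω => ω * ((Real.sin ((1 - α) * π) / π) * ω ^ (α - 1)) * (z ω t) ^ 2)
      (volume.restrict (Set.Ioi (0:ℝ))))
    (hint2 : ∀ t, Integrable (fun ω => (Real.sin ((1 - α) * π) / π) * ω ^ (α - 1) * z ω t)
      (volume.restrict (Set.Ioi (0:ℝ)))) :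
    AntitoneOn
      (fun t => (k / 2) * (x₁ t) ^ 2 +
        (c / 2) * (∫ ω in Set.Ioi (0:ℝ),
          (Real.sin ((1 - α) * π) / π) * ω ^ (α - 1) * (z ω t) ^ 2) +
        (m / 2) * (x₃ t) ^ 2)
      (Set.Ici (0:ℝ)) := by
  let μ : ℝ → ℝ := fun ω => (Real.sin ((1 - α) * π) / π) * ω ^ (α - 1)
  have hμpos : ∀ ω ∈ Set.Ioi (0:ℝ), 0 ≤ μ ω := by
    intro ω hω
    have hs : 0 < Real.sin ((1 - α) * π) :=
      Real.sin_pos_of_pos_of_lt_pi (by nlinarith [Real.pi_pos, hα.1, hα.2])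
        (by nlinarith [Real.pi_pos, hα.1, hα.2])
    have hr : 0 < (ω : ℝ) ^ (α - 1) := Real.rpow_pos_of_pos hω _
    have hp := Real.pi_pos
    positivity
  -- the total derivative of E
  have hE : ∀ t, HasDerivAt
      (fun t => (k / 2) * (x₁ t) ^ 2 +
        (c / 2) * (∫ ω in Set.Ioi (0:ℝ), μ ω * (z ω t) ^ 2) +
        (m / 2) * (x₃ t) ^ 2)
      ((k / 2) * (2 * x₁ t * x₃ t) +
        (c / 2) * (∫ ω in Set.Ioi (0:ℝ), μ ω * (2 * z ω t * (-ω * z ω t + x₃ t))) +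
        (m / 2) * (2 * x₃ t * ((-k * x₁ t - c * x₂ t) / m))) t := by
    intro t
    have h1 : HasDerivAt (fun t => (x₁ t) ^ 2) (2 * x₁ t * x₃ t) t := by
      have := (hx₁ t).fun_pow 2
      simpa using this
    have h3 : HasDerivAt (fun t => (x₃ t) ^ 2)
        (2 * x₃ t * ((-k * x₁ t - c * x₂ t) / m)) t := by
      have := (hx₃ t).fun_pow 2
      simpa using this
    exact ((h1.const_mul (k/2)).add ((hswap t).const_mul (c/2))).add (h3.const_mul (m/2))
  -- compute: derivative equals -c * ∫ ω μ z²
  have hderiv_eq : ∀ t,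
      (k / 2) * (2 * x₁ t * x₃ t) +
        (c / 2) * (∫ ω in Set.Ioi (0:ℝ), μ ω * (2 * z ω t * (-ω * z ω t + x₃ t))) +
        (m / 2) * (2 * x₃ t * ((-k * x₁ t - c * x₂ t) / m)) =
      -c * ∫ ω in Set.Ioi (0:ℝ), ω * μ ω * (z ω t) ^ 2 := by
    intro t
    have hsplit : (∫ ω in Set.Ioi (0:ℝ), μ ω * (2 * z ω t * (-ω * z ω t + x₃ t))) =
        (∫ ω in Set.Ioi (0:ℝ), ((-2) * (ω * μ ω * (z ω t) ^ 2) +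
          (2 * x₃ t) * (μ ω * z ω t))) := by
      apply integral_congr_ae
      filter_upwards with ω
      ring
    have hB : (∫ ω in Set.Ioi (0:ℝ), μ ω * z ω t) = x₂ t := (hx₂ t).symm
    rw [hsplit, integral_add (((hint t).const_mul (-2))) ((hint2 t).const_mul (2 * x₃ t)),
      integral_const_mul, integral_const_mul, hB]
    set A := ∫ ω in Set.Ioi (0:ℝ), ω * μ ω * (z ω t) ^ 2 with hA
    field_simp
    ring
  have hnonneg : ∀ t, 0 ≤ ∫ ω in Set.Ioi (0:ℝ), ω * μ ω * (z ω t) ^ 2 := by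
    intro t
    apply setIntegral_nonneg measurableSet_Ioi
    intro ω hω
    have := hμpos ω hω
    have : 0 ≤ ω * μ ω := mul_nonneg (le_of_lt hω) this
    positivity
  apply antitoneOn_of_deriv_nonpos (convex_Ici 0)
  · exact fun t _ => ((hE t).continuousAt).continuousWithinAt
  · exact fun t _ => (hE t).differentiableAt.differentiableWithinAt
  · intro t _
    rw [(hE t).deriv, hderiv_eq t]
    have := hnonneg t
    nlinarith
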